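/- Let l_0, ..., l_r be exponent tuples with 𝔩_i the gcd of the entries of l_i, and suppose gcd(𝔩_0, 𝔩_1) = gcd(𝔩_1, 𝔩_2) = gcd(𝔩_0, 𝔩_2) = 2 and gcd(𝔩_i, 𝔩_j) = 1 whenever j ∉ {0,1,2}. Let P_0' be the matrix built as in Construction 2.1 from 2 copies each of (1/2)l_0, (1/2)l_1, (1/2)l_2 and 4 copies of each l_i for i ≥ 3. Then the torsion subgroup of the cokernel ℤ^{n'}/im((P_0')^T) is isomorphic to ℤ/(𝔩_0/2)ℤ × ℤ/(𝔩_1/2)ℤ × ℤ/(𝔩_2/2)ℤ × (ℤ/𝔩_3ℤ)³ × ... × (ℤ/𝔩_rℤ)³. -/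

import Mathlib

/-- Construction 2.1: given a distinguished block `b0`, block lengths `ν` and exponent
vectors `m b` (of length `ν b`) for each block `b`, the associated matrix has one row
for each block `b ≠ b0`, and the row of `b` is `(-m b0, 0, ..., 0, m b, 0, ..., 0)`
(with `-m b0` in block `b0` and `m b` in block `b`). -/
def trinMatrix {B : Type*} [DecidableEq B] (b0 : B) (ν : B → ℕ)
    (m : (b : B) → Fin (ν b) → ℤ) :
    Matrix {b : B // b ≠ b0} ((b : B) × Fin (ν b)) ℤ := fun row col =>
  if h0 : col.1 = b0 then -(m b0 (h0 ▸ col.2))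
  else if h : col.1 = row.1 then m row.1 (h ▸ col.2) else 0

/-- Block structure for `P₀'` in Lemma 3.2(ii): two copies of each of the blocks
`0, 1, 2` and four copies of each of the blocks `3, ..., r`. -/
def blockLen10 (r : ℕ) (n : ℕ → ℕ) : (Fin 3 × Fin 2) ⊕ (Fin (r - 2) × Fin 4) → ℕ
  | Sum.inl it => n it.1.1
  | Sum.inr it => n (it.1.1 + 3)

/-- Exponent data for `P₀'` in Lemma 3.2(ii): the two copies of block `i ∈ {0, 1, 2}`
carry `(1/2)·l_i`, and each of the four copies of block `i ≥ 3` carries `l_i`. -/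
def blockVec10 (r : ℕ) (n : ℕ → ℕ) (l : ℕ → ℕ → ℕ) :
    (b : (Fin 3 × Fin 2) ⊕ (Fin (r - 2) × Fin 4)) → Fin (blockLen10 r n b) → ℤ
  | Sum.inl it, j => ((l it.1.1 j.1 / 2 : ℕ) : ℤ)
  | Sum.inr it, j => ((l (it.1.1 + 3) j.1 : ℕ) : ℤ)

lemma finset_gcd_bezout {ι : Type*} [DecidableEq ι] (s : Finset ι) (f : ι → ℕ) :
    ∃ β : ι → ℤ, ((s.gcd f : ℕ) : ℤ) = ∑ i ∈ s, β i * (f i : ℤ) := by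
  induction s using Finset.induction with
  | empty => exact ⟨0, by simp⟩
  | insert a s ha ih =>
      obtain ⟨β, hβ⟩ := ih
      refine ⟨fun i => if i = a then Nat.gcdA (f a) (s.gcd f)
        else Nat.gcdB (f a) (s.gcd f) * β i, ?_⟩
      rw [Finset.gcd_insert, Finset.sum_insert ha]
      have h1 : (GCDMonoid.gcd (f a) (s.gcd f) : ℕ) = Nat.gcd (f a) (s.gcd f) := rfl
      rw [h1, Nat.gcd_eq_gcd_ab]
      have : ∀ i ∈ s, (if i = a then Nat.gcdA (f a) (s.gcd f)
          else Nat.gcdB (f a) (s.gcd f) * β i) * (f i : ℤ)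
          = Nat.gcdB (f a) (s.gcd f) * (β i * (f i : ℤ)) := by
        intro i hi
        rw [if_neg (by rintro rfl; exact ha hi), mul_assoc]
      rw [Finset.sum_congr rfl this, ← Finset.mul_sum, ← hβ]
      simp only [if_true]
      ring

abbrev TB (r : ℕ) := (Fin 3 × Fin 2) ⊕ (Fin (r - 2) × Fin 4)

def ddL (r : ℕ) (L : ℕ → ℕ) : TB r → ℕ
  | .inl it => L it.1.1 / 2
  | .inr it => L (it.1.1 + 3)

def idxB (r : ℕ) : TB r → ℕ
  | .inl it => it.1.1
  | .inr it => it.1.1 + 3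

def mhat (r : ℕ) (n : ℕ → ℕ) (l : ℕ → ℕ → ℕ) (L : ℕ → ℕ) :
    (b : TB r) → Fin (blockLen10 r n b) → ℕ
  | .inl it, j => l it.1.1 j.1 / 2 / (L it.1.1 / 2)
  | .inr it, j => l (it.1.1 + 3) j.1 / L (it.1.1 + 3)

def EeL (r : ℕ) (L : ℕ → ℕ) : TB r → ℕ
  | .inl it => ((Finset.univ.erase it.1).prod fun i : Fin 3 => L i.1 / 2) *
      ∏ k : Fin (r - 2), L (k.1 + 3)
  | .inr it => (∏ i : Fin 3, L i.1 / 2) *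
      (Finset.univ.erase it.1).prod fun k : Fin (r - 2) => L (k.1 + 3)

def DdL (r : ℕ) (L : ℕ → ℕ) : ℕ :=
  (∏ i : Fin 3, L i.1 / 2) * ∏ k : Fin (r - 2), L (k.1 + 3)

def grpB (r : ℕ) : TB r → Fin 3 ⊕ Fin (r - 2) := Sum.map Prod.fst Prod.fst

section facts

variable (r : ℕ) (n : ℕ → ℕ) (l : ℕ → ℕ → ℕ) (L : ℕ → ℕ)

lemma blockLen_eq (b : TB r) : blockLen10 r n b = n (idxB r b) := by
  rcases b with ⟨⟨i, c⟩⟩ | ⟨⟨k, c⟩⟩ <;> rfl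

lemma idx_le (hr : 2 ≤ r) (b : TB r) : idxB r b ≤ r := by
  rcases b with ⟨⟨i, c⟩⟩ | ⟨⟨k, c⟩⟩
  · have := i.isLt; simp only [idxB]; omega
  · have := k.isLt; simp only [idxB]; omega

lemma ddE_mul (b : TB r) : ddL r L b * EeL r L b = DdL r L := by
  rcases b with ⟨⟨i, c⟩⟩ | ⟨⟨k, c⟩⟩
  · simp only [ddL, EeL, DdL, ← mul_assoc]
    rw [Finset.mul_prod_erase Finset.univ (fun i : Fin 3 => L i.1 / 2) (Finset.mem_univ i)]
  · simp only [ddL, EeL, DdL]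
    rw [mul_comm (L (k.1+3)), mul_assoc,
      Finset.prod_erase_mul Finset.univ (fun k : Fin (r-2) => L (k.1 + 3)) (Finset.mem_univ k)]

end facts

section facts2

variable {r : ℕ} {n : ℕ → ℕ} {l : ℕ → ℕ → ℕ} {L : ℕ → ℕ}

lemma Lpos (hn : ∀ i ≤ r, 0 < n i) (hl : ∀ i ≤ r, ∀ j < n i, 0 < l i j)
    (hL : ∀ i, L i = (Finset.range (n i)).gcd (l i)) {i : ℕ} (hi : i ≤ r) : 0 < L i := by
  rw [hL]
  rcases Nat.eq_zero_or_pos ((Finset.range (n i)).gcd (l i)) with h | h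
  · have h0 : (0:ℕ) ∈ Finset.range (n i) := Finset.mem_range.mpr (hn i hi)
    have := Finset.gcd_eq_zero_iff.mp h 0 h0
    exact absurd this (hl i hi 0 (hn i hi)).ne'
  · exact h

lemma Ldvd (hL : ∀ i, L i = (Finset.range (n i)).gcd (l i)) {i j : ℕ} (hj : j < n i) :
    L i ∣ l i j := by
  rw [hL]; exact Finset.gcd_dvd (Finset.mem_range.mpr hj)

lemma Leven (h01 : Nat.gcd (L 0) (L 1) = 2) (h12 : Nat.gcd (L 1) (L 2) = 2)
    {m : ℕ} (hm : m < 3) : 2 ∣ L m := by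
  interval_cases m
  · have := Nat.gcd_dvd_left (L 0) (L 1); rwa [h01] at this
  · have := Nat.gcd_dvd_right (L 0) (L 1); rwa [h01] at this
  · have := Nat.gcd_dvd_right (L 1) (L 2); rwa [h12] at this

lemma half_coprime {u v : ℕ} (hu : 2 ∣ u) (hv : 2 ∣ v) (h : Nat.gcd u v = 2) :
    Nat.Coprime (u / 2) (v / 2) := by
  obtain ⟨a, rfl⟩ := hu
  obtain ⟨b, rfl⟩ := hv
  rw [Nat.gcd_mul_left] at h
  have : Nat.gcd a b = 1 := by omega
  simpa [Nat.mul_div_cancel_left] using this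

end facts2

section facts3

variable {r : ℕ} {n : ℕ → ℕ} {l : ℕ → ℕ → ℕ} {L : ℕ → ℕ}

lemma dd_pos (hr : 2 ≤ r) (hLpos : ∀ i ≤ r, 0 < L i) (hLev : ∀ m < 3, 2 ∣ L m)
    (b : TB r) : 0 < ddL r L b := by
  rcases b with ⟨⟨i, c⟩⟩ | ⟨⟨k, c⟩⟩
  · have h1 : i.1 < 3 := i.isLt
    have h2 : 2 ≤ L i.1 := Nat.le_of_dvd (hLpos i.1 (by omega)) (hLev i.1 h1)
    exact Nat.div_pos h2 (by norm_num)
  · have := k.isLt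
    exact hLpos (k.1 + 3) (by omega) |>.trans_le (le_refl _) |>.trans_le (le_refl _)

lemma mkey_nat (hr : 2 ≤ r) (hLpos : ∀ i ≤ r, 0 < L i) (hLev : ∀ m < 3, 2 ∣ L m)
    (hLd : ∀ i, ∀ j < n i, L i ∣ l i j)
    (b : TB r) (j : Fin (blockLen10 r n b)) :
    l (idxB r b) j.1 = L (idxB r b) * mhat r n l L b j := by
  rcases b with ⟨⟨i, c⟩⟩ | ⟨⟨k, c⟩⟩
  · have h1 : i.1 < 3 := i.isLt
    obtain ⟨a, ha⟩ := hLev i.1 h1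
    have hapos : 0 < a := by have := hLpos i.1 (by omega); omega
    obtain ⟨cq, hc⟩ := hLd i.1 j.1 j.isLt
    show l i.1 j.1 = L i.1 * (l i.1 j.1 / 2 / (L i.1 / 2))
    rw [hc, ha]
    have e1 : 2 * a * cq / 2 = a * cq := by
      rw [mul_assoc, Nat.mul_div_cancel_left _ (by norm_num : 0 < 2)]
    have e2 : 2 * a / 2 = a := Nat.mul_div_cancel_left _ (by norm_num)
    rw [e1, e2, Nat.mul_div_cancel_left _ hapos]
  · show l (k.1+3) j.1 = L (k.1+3) * (l (k.1+3) j.1 / L (k.1+3))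
    exact (Nat.mul_div_cancel' (hLd (k.1+3) j.1 j.isLt) ).symm

lemma mzkey (hr : 2 ≤ r) (hLpos : ∀ i ≤ r, 0 < L i) (hLev : ∀ m < 3, 2 ∣ L m)
    (hLd : ∀ i, ∀ j < n i, L i ∣ l i j)
    (b : TB r) (j : Fin (blockLen10 r n b)) :
    blockVec10 r n l b j = (ddL r L b : ℤ) * (mhat r n l L b j : ℤ) := by
  rcases b with ⟨⟨i, c⟩⟩ | ⟨⟨k, c⟩⟩
  · have h1 : i.1 < 3 := i.isLt
    obtain ⟨a, ha⟩ := hLev i.1 h1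
    have hapos : 0 < a := by have := hLpos i.1 (by omega); omega
    obtain ⟨cq, hc⟩ := hLd i.1 j.1 j.isLt
    show ((l i.1 j.1 / 2 : ℕ) : ℤ) = ((L i.1 / 2 : ℕ) : ℤ) * ((l i.1 j.1 / 2 / (L i.1 / 2) : ℕ) : ℤ)
    rw [hc, ha]
    have e1 : 2 * a * cq / 2 = a * cq := by
      rw [mul_assoc, Nat.mul_div_cancel_left _ (by norm_num : 0 < 2)]
    have e2 : 2 * a / 2 = a := Nat.mul_div_cancel_left _ (by norm_num)
    rw [e1, e2, Nat.mul_div_cancel_left _ hapos]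
    push_cast
    ring
  · show ((l (k.1+3) j.1 : ℕ) : ℤ) = ((L (k.1+3) : ℕ) : ℤ) * ((l (k.1+3) j.1 / L (k.1+3) : ℕ) : ℤ)
    have h := mkey_nat hr hLpos hLev hLd (Sum.inr (k, c)) j
    simp only [idxB] at h
    rw [← Nat.cast_mul]
    exact congrArg (Nat.cast (R := ℤ)) h

lemma bez_helper {n0 : ℕ} {f : ℕ → ℕ} {L0 : ℕ} (hL0 : L0 = (Finset.range n0).gcd f)
    (hpos : 0 < L0) {N : ℕ} (hN : N = n0) (mh : Fin N → ℕ)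
    (key : ∀ j : Fin N, (f j.1 : ℤ) = (L0 : ℤ) * (mh j : ℤ)) :
    ∃ β : Fin N → ℤ, ∑ j, β j * (mh j : ℤ) = 1 := by
  subst hN
  obtain ⟨β0, hβ0⟩ := finset_gcd_bezout (Finset.range N) f
  rw [← hL0, ← Fin.sum_univ_eq_sum_range (fun j => β0 j * (f j : ℤ)) ] at hβ0
  refine ⟨fun j => β0 j.1, ?_⟩
  have h2 : (L0 : ℤ) * (∑ j : Fin N, β0 j.1 * (mh j : ℤ)) = (L0 : ℤ) * 1 := by
    rw [Finset.mul_sum, mul_one]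
    calc ∑ j : Fin N, (L0 : ℤ) * (β0 j.1 * (mh j : ℤ))
        = ∑ j : Fin N, β0 j.1 * ((f j.1 : ℕ) : ℤ) := by
          refine Finset.sum_congr rfl fun j _ => ?_
          rw [key j]; ring
      _ = (L0 : ℤ) := hβ0.symm
  exact mul_left_cancel₀ (Int.natCast_ne_zero.mpr hpos.ne') h2

lemma bez (hr : 2 ≤ r) (hLpos : ∀ i ≤ r, 0 < L i) (hLev : ∀ m < 3, 2 ∣ L m)
    (hLd : ∀ i, ∀ j < n i, L i ∣ l i j)
    (hL : ∀ i, L i = (Finset.range (n i)).gcd (l i))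
    (b : TB r) :
    ∃ β : Fin (blockLen10 r n b) → ℤ,
      ∑ j, β j * (mhat r n l L b j : ℤ) = 1 := by
  have hidx : idxB r b ≤ r := idx_le r hr b
  refine bez_helper (hL (idxB r b)) (hLpos _ hidx) (blockLen_eq r n b)
    (fun j => mhat r n l L b j) (fun j => ?_)
  exact_mod_cast congrArg (Nat.cast (R := ℤ)) (mkey_nat hr hLpos hLev hLd b j)

end facts3

section facts4

variable {r : ℕ} {n : ℕ → ℕ} {l : ℕ → ℕ → ℕ} {L : ℕ → ℕ}

lemma cg_lem (h01 : Nat.gcd (L 0) (L 1) = 2) (h12 : Nat.gcd (L 1) (L 2) = 2)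
    (h02 : Nat.gcd (L 0) (L 2) = 2) (i j : Fin 3) (hij : i ≠ j) :
    Nat.Coprime (L i.1 / 2) (L j.1 / 2) := by
  have hev : ∀ m < 3, 2 ∣ L m := fun m hm => Leven h01 h12 hm
  fin_cases i <;> fin_cases j <;> simp_all <;>
    first
      | exact half_coprime (hev 0 (by norm_num)) (hev 1 (by norm_num)) h01
      | exact half_coprime (hev 0 (by norm_num)) (hev 2 (by norm_num)) h02
      | exact half_coprime (hev 1 (by norm_num)) (hev 2 (by norm_num)) h12
      | exact (half_coprime (hev 0 (by norm_num)) (hev 1 (by norm_num)) h01).symm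
      | exact (half_coprime (hev 0 (by norm_num)) (hev 2 (by norm_num)) h02).symm
      | exact (half_coprime (hev 1 (by norm_num)) (hev 2 (by norm_num)) h12).symm

lemma half_dvd {u : ℕ} (hu : 2 ∣ u) : u / 2 ∣ u := by
  obtain ⟨a, rfl⟩ := hu
  rw [Nat.mul_div_cancel_left _ (by norm_num : 0 < 2)]
  exact dvd_mul_left a 2

end facts4

section facts5

variable {r : ℕ} {n : ℕ → ℕ} {l : ℕ → ℕ → ℕ} {L : ℕ → ℕ}

lemma cgM_lem (hr : 2 ≤ r) (h01 : Nat.gcd (L 0) (L 1) = 2) (h12 : Nat.gcd (L 1) (L 2) = 2)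
    (hcop : ∀ i j, i ≤ r → j ≤ r → i ≠ j → 3 ≤ j → Nat.gcd (L i) (L j) = 1)
    (i : Fin 3) (k : Fin (r - 2)) : Nat.Coprime (L i.1 / 2) (L (k.1 + 3)) := by
  have hk := k.isLt
  have h : Nat.Coprime (L i.1) (L (k.1 + 3)) :=
    hcop i.1 (k.1 + 3) (by have := i.isLt; omega) (by omega) (by omega) (by omega)
  exact Nat.Coprime.coprime_dvd_left (half_dvd (Leven h01 h12 i.isLt)) h

lemma cMM_lem (hr : 2 ≤ r)
    (hcop : ∀ i j, i ≤ r → j ≤ r → i ≠ j → 3 ≤ j → Nat.gcd (L i) (L j) = 1)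
    (k k' : Fin (r - 2)) (hkk : k ≠ k') : Nat.Coprime (L (k.1 + 3)) (L (k'.1 + 3)) := by
  have h1 := k.isLt; have h2 := k'.isLt
  have : k.1 ≠ k'.1 := fun h => hkk (Fin.ext h)
  exact hcop (k.1 + 3) (k'.1 + 3) (by omega) (by omega) (by omega) (by omega)

lemma dvd_Ee (b b' : TB r) (hbb : grpB r b ≠ grpB r b') : ddL r L b ∣ EeL r L b' := by
  rcases b with ⟨⟨i, c⟩⟩ | ⟨⟨k, c⟩⟩ <;> rcases b' with ⟨⟨i', c'⟩⟩ | ⟨⟨k', c'⟩⟩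
  · have hii : i ≠ i' := by
      intro h; exact hbb (by simp [grpB, h])
    exact dvd_mul_of_dvd_left
      (Finset.dvd_prod_of_mem _ (Finset.mem_erase.mpr ⟨hii, Finset.mem_univ i⟩)) _
  · exact dvd_mul_of_dvd_left (Finset.dvd_prod_of_mem _ (Finset.mem_univ i)) _
  · exact dvd_mul_of_dvd_right (Finset.dvd_prod_of_mem _ (Finset.mem_univ k)) _
  · have hkk : k ≠ k' := by
      intro h; exact hbb (by simp [grpB, h])
    exact dvd_mul_of_dvd_right
      (Finset.dvd_prod_of_mem _ (Finset.mem_erase.mpr ⟨hkk, Finset.mem_univ k⟩)) _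

lemma coprime_Ee (hr : 2 ≤ r) (h01 : Nat.gcd (L 0) (L 1) = 2)
    (h12 : Nat.gcd (L 1) (L 2) = 2) (h02 : Nat.gcd (L 0) (L 2) = 2)
    (hcop : ∀ i j, i ≤ r → j ≤ r → i ≠ j → 3 ≤ j → Nat.gcd (L i) (L j) = 1)
    (b : TB r) : Nat.Coprime (ddL r L b) (EeL r L b) := by
  rcases b with ⟨⟨i, c⟩⟩ | ⟨⟨k, c⟩⟩
  · refine Nat.Coprime.mul_right ?_ ?_
    · exact Nat.Coprime.prod_right fun j hj =>
        cg_lem h01 h12 h02 i j (Finset.ne_of_mem_erase hj).symm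
    · exact Nat.Coprime.prod_right fun k _ => cgM_lem hr h01 h12 hcop i k
  · refine Nat.Coprime.mul_right ?_ ?_
    · exact Nat.Coprime.prod_right fun i _ => (cgM_lem hr h01 h12 hcop i k).symm
    · exact Nat.Coprime.prod_right fun k' hk' =>
        cMM_lem hr hcop k k' (Finset.ne_of_mem_erase hk').symm

end facts5

section facts6

variable {r : ℕ}

lemma sumB (f : TB r → ℤ) :
    ∑ b, f b = f (.inl (0,0)) + f (.inl (0,1)) + f (.inl (1,0)) + f (.inl (1,1)) +
      f (.inl (2,0)) + f (.inl (2,1)) +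
      ∑ k : Fin (r - 2), (f (.inr (k,0)) + f (.inr (k,1)) + f (.inr (k,2)) + f (.inr (k,3))) := by
  rw [Fintype.sum_sum_type, Fintype.sum_prod_type, Fintype.sum_prod_type]
  rw [Fin.sum_univ_three]
  simp only [Fin.sum_univ_two, Fin.sum_univ_four]
  ring

lemma sum_ne_b0 (b0 : TB r) (f : TB r → ℤ) :
    ∑ row : {b : TB r // b ≠ b0}, f row.1 = ∑ b ∈ Finset.univ.erase b0, f b := by
  exact (Finset.sum_subtype (p := fun b => b ≠ b0) (Finset.univ.erase b0)
    (fun x => by simp) f).symm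

lemma sum_erase_eq (b0 : TB r) (f : TB r → ℤ) :
    ∑ b ∈ Finset.univ.erase b0, f b = (∑ b, f b) - f b0 := by
  have := Finset.add_sum_erase Finset.univ f (Finset.mem_univ b0)
  omega

end facts6

section matrixfacts

variable {B : Type*} [DecidableEq B] [Fintype B] (b0 : B) (ν : B → ℕ)
    (m : (b : B) → Fin (ν b) → ℤ)

lemma mulVec_b0 (v : {b : B // b ≠ b0} → ℤ) (j : Fin (ν b0)) :
    (trinMatrix b0 ν m).transpose.mulVec v ⟨b0, j⟩ = -(m b0 j) * ∑ row, v row := by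
  simp only [Matrix.mulVec, Matrix.transpose_apply, dotProduct]
  rw [Finset.mul_sum]
  refine Finset.sum_congr rfl fun row _ => ?_
  simp [trinMatrix]

lemma mulVec_ne (v : {b : B // b ≠ b0} → ℤ) (b : B) (hb : b ≠ b0) (j : Fin (ν b)) :
    (trinMatrix b0 ν m).transpose.mulVec v ⟨b, j⟩ = m b j * v ⟨b, hb⟩ := by
  simp only [Matrix.mulVec, Matrix.transpose_apply, dotProduct]
  rw [Finset.sum_eq_single ⟨b, hb⟩]
  · simp [trinMatrix, hb]
  · intro row _ hrow
    have hne : b ≠ row.1 := fun h => hrow (Subtype.ext h.symm)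
    simp [trinMatrix, hb, hne]
  · intro h; exact absurd (Finset.mem_univ _) h

end matrixfacts

set_option maxHeartbeats 3000000 in
/-- Lemma 3.2(ii): with `gcd(𝔩₀,𝔩₁) = gcd(𝔩₁,𝔩₂) = gcd(𝔩₀,𝔩₂) = 2` and
`gcd(𝔩ᵢ,𝔩ⱼ) = 1` whenever `j ∉ {0,1,2}`, the torsion subgroup of `ℤ^{n'}/im((P₀')ᵀ)`
is isomorphic to `ℤ/(𝔩₀/2)ℤ × ℤ/(𝔩₁/2)ℤ × ℤ/(𝔩₂/2)ℤ × (ℤ/𝔩₃ℤ)³ × ... × (ℤ/𝔩ᵣℤ)³`. -/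
theorem stmt_10 (r : ℕ) (hr : 2 ≤ r) (n : ℕ → ℕ) (l : ℕ → ℕ → ℕ)
    (hn : ∀ i ≤ r, 0 < n i) (hl : ∀ i ≤ r, ∀ j < n i, 0 < l i j)
    (L : ℕ → ℕ) (hL : ∀ i, L i = (Finset.range (n i)).gcd (l i))
    (h01 : Nat.gcd (L 0) (L 1) = 2) (h12 : Nat.gcd (L 1) (L 2) = 2)
    (h02 : Nat.gcd (L 0) (L 2) = 2)
    (hcop : ∀ i j, i ≤ r → j ≤ r → i ≠ j → 3 ≤ j → Nat.gcd (L i) (L j) = 1) :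
    Nonempty ((Submodule.torsion ℤ
        ((((b : (Fin 3 × Fin 2) ⊕ (Fin (r - 2) × Fin 4)) × Fin (blockLen10 r n b)) → ℤ) ⧸
          LinearMap.range
            ((trinMatrix (Sum.inl (0, 0)) (blockLen10 r n)
              (blockVec10 r n l)).transpose.mulVecLin))) ≃+
      (ZMod (L 0 / 2) × ZMod (L 1 / 2) × ZMod (L 2 / 2) ×
        ((i : Fin (r - 2)) → Fin 3 → ZMod (L (i.1 + 3))))) := by
  classical
  have hLpos : ∀ i ≤ r, 0 < L i := fun i hi => Lpos hn hl hL hi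
  have hLev : ∀ m' < 3, 2 ∣ L m' := fun m' hm' => Leven h01 h12 hm'
  have hLd : ∀ i, ∀ j, j < n i → L i ∣ l i j := fun i j hj => Ldvd hL hj
  have hdd : ∀ b : TB r, 0 < ddL r L b := dd_pos hr hLpos hLev
  have hmz : ∀ (b : TB r) (j : Fin (blockLen10 r n b)),
      blockVec10 r n l b j = (ddL r L b : ℤ) * (mhat r n l L b j : ℤ) :=
    mzkey hr hLpos hLev hLd
  obtain ⟨β, hβ⟩ := Classical.axiomOfChoice (bez hr hLpos hLev hLd hL)
  -- notation
  set b0 : TB r := Sum.inl (0, 0) with hb0def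
  -- the linear functional per block
  set tc : (((b : TB r) × Fin (blockLen10 r n b)) → ℤ) → TB r → ℤ := fun x b => ∑ j, β b j * x ⟨b, j⟩ with htcdef
  have tc_add : ∀ (x y : ((b : TB r) × Fin (blockLen10 r n b)) → ℤ) (b : TB r), tc (x + y) b = tc x b + tc y b := by
    intro x y b
    simp [htcdef, Pi.add_apply, mul_add, Finset.sum_add_distrib]
  have tc_mulvec : ∀ (v : {b : TB r // b ≠ b0} → ℤ) (b : TB r) (hb : b ≠ b0),
      tc ((trinMatrix b0 (blockLen10 r n) (blockVec10 r n l)).transpose.mulVec v) b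
        = (ddL r L b : ℤ) * v ⟨b, hb⟩ := by
    intro v b hb
    simp only [htcdef]
    calc ∑ j, β b j *
          ((trinMatrix b0 (blockLen10 r n) (blockVec10 r n l)).transpose.mulVec v ⟨b, j⟩)
        = ∑ j, β b j * (mhat r n l L b j : ℤ) * ((ddL r L b : ℤ) * v ⟨b, hb⟩) := by
          refine Finset.sum_congr rfl fun j _ => ?_
          rw [mulVec_ne b0 (blockLen10 r n) (blockVec10 r n l) v b hb j, hmz b j]
          ring
      _ = (∑ j, β b j * (mhat r n l L b j : ℤ)) * ((ddL r L b : ℤ) * v ⟨b, hb⟩) := by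
          rw [Finset.sum_mul]
      _ = (ddL r L b : ℤ) * v ⟨b, hb⟩ := by rw [hβ b, one_mul]
  have tc_mulvec0 : ∀ (v : {b : TB r // b ≠ b0} → ℤ),
      tc ((trinMatrix b0 (blockLen10 r n) (blockVec10 r n l)).transpose.mulVec v) b0
        = -(ddL r L b0 : ℤ) * ∑ row, v row := by
    intro v
    simp only [htcdef]
    calc ∑ j, β b0 j *
          ((trinMatrix b0 (blockLen10 r n) (blockVec10 r n l)).transpose.mulVec v ⟨b0, j⟩)
        = ∑ j, β b0 j * (mhat r n l L b0 j : ℤ) * (-(ddL r L b0 : ℤ) * ∑ row, v row) := by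
          refine Finset.sum_congr rfl fun j _ => ?_
          rw [mulVec_b0 b0 (blockLen10 r n) (blockVec10 r n l) v j, hmz b0 j]
          ring
      _ = (∑ j, β b0 j * (mhat r n l L b0 j : ℤ)) * (-(ddL r L b0 : ℤ) * ∑ row, v row) := by
          rw [Finset.sum_mul]
      _ = -(ddL r L b0 : ℤ) * ∑ row, v row := by rw [hβ b0, one_mul]
  -- the map to T
  set qf : (((b : TB r) × Fin (blockLen10 r n b)) → ℤ) →
      (ZMod (L 0 / 2) × ZMod (L 1 / 2) × ZMod (L 2 / 2) ×
        ((i : Fin (r - 2)) → Fin 3 → ZMod (L (i.1 + 3)))) := fun x =>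
    (((tc x (.inl (0, 1)) : ℤ) : ZMod (L 0 / 2)),
     ((tc x (.inl (1, 0)) : ℤ) : ZMod (L 1 / 2)),
     ((tc x (.inl (2, 0)) : ℤ) : ZMod (L 2 / 2)),
     fun k c => ((tc x (.inr (k, c.castSucc)) : ℤ) : ZMod (L (k.1 + 3)))) with hqfdef
  have qf_add : ∀ x y, qf (x + y) = qf x + qf y := by
    intro x y
    simp only [hqfdef, tc_add, Int.cast_add]
    rfl
  set q : (((b : TB r) × Fin (blockLen10 r n b)) → ℤ) →ₗ[ℤ]
      (ZMod (L 0 / 2) × ZMod (L 1 / 2) × ZMod (L 2 / 2) ×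
        ((i : Fin (r - 2)) → Fin 3 → ZMod (L (i.1 + 3)))) := AddMonoidHom.toIntLinearMap
    { toFun := qf
      map_zero' := by
        have h0 : ∀ b : TB r, tc 0 b = 0 := by intro b; simp [htcdef]
        simp only [hqfdef, h0, Int.cast_zero]
        rfl
      map_add' := qf_add } with hqdef
  have hker : LinearMap.range
      ((trinMatrix b0 (blockLen10 r n) (blockVec10 r n l)).transpose.mulVecLin) ≤
      LinearMap.ker q := by
    rintro x ⟨v, rfl⟩
    rw [LinearMap.mem_ker]
    show qf ((trinMatrix b0 (blockLen10 r n) (blockVec10 r n l)).transpose.mulVecLin v) = 0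
    rw [Matrix.mulVecLin_apply]
    have hz : ∀ (b : TB r) (hb : b ≠ b0) (N : ℕ), N = ddL r L b →
        ((tc ((trinMatrix b0 (blockLen10 r n) (blockVec10 r n l)).transpose.mulVec v) b : ℤ) :
          ZMod N) = 0 := by
      intro b hb N hN
      rw [tc_mulvec v b hb, hN]
      push_cast
      simp
    simp only [hqfdef, Prod.mk_eq_zero]
    refine ⟨hz (Sum.inl (0, 1)) (by rw [hb0def]; simp) (L 0 / 2) rfl,
      hz (Sum.inl (1, 0)) (by rw [hb0def]; simp) (L 1 / 2) rfl,
      hz (Sum.inl (2, 0)) (by rw [hb0def]; simp) (L 2 / 2) rfl, ?_⟩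
    funext k c
    exact hz (Sum.inr (k, c.castSucc)) (by rw [hb0def]; simp) (L (k.1 + 3)) rfl
  set π := Submodule.liftQ _ q hker with hπdef
  set F' := π.comp (Submodule.torsion ℤ
      ((((b : TB r) × Fin (blockLen10 r n b)) → ℤ) ⧸
        LinearMap.range
          ((trinMatrix b0 (blockLen10 r n) (blockVec10 r n l)).transpose.mulVecLin))).subtype
    with hF'def
  have hDd : 0 < DdL r L := by
    have h3 : (0:ℕ) < ∏ i : Fin 3, L i.1 / 2 :=
      Finset.prod_pos (fun i _ => hdd (Sum.inl (i, 0)))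
    have h4 : (0:ℕ) < ∏ k : Fin (r-2), L (k.1+3) :=
      Finset.prod_pos (fun k _ => hdd (Sum.inr (k, 0)))
    exact Nat.mul_pos h3 h4
  have hEpos : ∀ b : TB r, 0 < EeL r L b := by
    intro b
    rcases Nat.eq_zero_or_pos (EeL r L b) with h | h
    · exfalso; have := ddE_mul r L b; rw [h, mul_zero] at this; omega
    · exact h
  have hEeZ : ∀ b : TB r, (ddL r L b : ℤ) * (EeL r L b : ℤ) = (DdL r L : ℤ) := by
    intro b
    exact_mod_cast congrArg (Nat.cast (R := ℤ)) (ddE_mul r L b)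
  have hcopE : ∀ b : TB r, Int.gcd (ddL r L b) (EeL r L b) = 1 := fun b => by
    rw [Int.gcd_natCast_natCast]; exact coprime_Ee hr h01 h12 h02 hcop b
  have hdvdE : ∀ b b' : TB r, grpB r b ≠ grpB r b' →
      (ddL r L b : ℤ) ∣ (EeL r L b' : ℤ) :=
    fun b b' h => Int.natCast_dvd_natCast.mpr (dvd_Ee b b' h)
  have hinj : Function.Injective F' := by
    rw [injective_iff_map_eq_zero]
    intro a ha
    obtain ⟨x, hx⟩ := Submodule.Quotient.mk_surjective _ a.1
    obtain ⟨⟨k, hk⟩, hka⟩ := (Submodule.mem_torsion_iff a.1).mp a.2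
    have hk0 : k ≠ 0 := mem_nonZeroDivisors_iff_ne_zero.mp hk
    rw [← hx, Submonoid.mk_smul, ← Submodule.Quotient.mk_smul,
      Submodule.Quotient.mk_eq_zero] at hka
    obtain ⟨v, hv⟩ := hka
    set ve : TB r → ℤ := fun b => if hb : b ≠ b0 then v ⟨b, hb⟩ else 0 with hvedef
    have hvs : ∑ row : {b : TB r // b ≠ b0}, v row = ∑ b ∈ Finset.univ.erase b0, ve b := by
      rw [← sum_ne_b0 b0 ve]
      refine Finset.sum_congr rfl fun row _ => ?_
      simp [hvedef, row.2]
    have hvv : ∀ col : (b : TB r) × Fin (blockLen10 r n b),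
        (trinMatrix b0 (blockLen10 r n) (blockVec10 r n l)).transpose.mulVec v col
          = k * x col := by
      intro col
      have hcol := congrFun hv col
      rw [Matrix.mulVecLin_apply] at hcol
      rw [hcol]
      simp
    have eqb : ∀ (b : TB r) (hb : b ≠ b0) (j : Fin (blockLen10 r n b)),
        k * x ⟨b, j⟩ = blockVec10 r n l b j * ve b := by
      intro b hb j
      rw [← hvv ⟨b, j⟩, mulVec_ne b0 _ _ v b hb j]
      simp [hvedef, hb]
    have eq0 : ∀ j : Fin (blockLen10 r n b0),
        k * x ⟨b0, j⟩ = -(blockVec10 r n l b0 j) * ∑ b ∈ Finset.univ.erase b0, ve b := by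
      intro j
      rw [← hvv ⟨b0, j⟩, mulVec_b0 b0 _ _ v j, hvs]
    have htb : ∀ (b : TB r) (hb : b ≠ b0), k * tc x b = (ddL r L b : ℤ) * ve b := by
      intro b hb
      simp only [htcdef]
      rw [Finset.mul_sum]
      calc ∑ j, k * (β b j * x ⟨b, j⟩)
          = ∑ j, β b j * (mhat r n l L b j : ℤ) * ((ddL r L b : ℤ) * ve b) := by
            refine Finset.sum_congr rfl fun j _ => ?_
            have h1 : k * (β b j * x ⟨b, j⟩) = β b j * (k * x ⟨b, j⟩) := by ring
            rw [h1, eqb b hb j, hmz b j]; ring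
        _ = (∑ j, β b j * (mhat r n l L b j : ℤ)) * ((ddL r L b : ℤ) * ve b) := by
            rw [Finset.sum_mul]
        _ = (ddL r L b : ℤ) * ve b := by rw [hβ b, one_mul]
    have htb0 : k * tc x b0 = -(ddL r L b0 : ℤ) * ∑ b ∈ Finset.univ.erase b0, ve b := by
      simp only [htcdef]
      rw [Finset.mul_sum]
      calc ∑ j, k * (β b0 j * x ⟨b0, j⟩)
          = ∑ j, β b0 j * (mhat r n l L b0 j : ℤ) *
              (-(ddL r L b0 : ℤ) * ∑ b ∈ Finset.univ.erase b0, ve b) := by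
            refine Finset.sum_congr rfl fun j _ => ?_
            have h1 : k * (β b0 j * x ⟨b0, j⟩) = β b0 j * (k * x ⟨b0, j⟩) := by ring
            rw [h1, eq0 j, hmz b0 j]; ring
        _ = (∑ j, β b0 j * (mhat r n l L b0 j : ℤ)) *
              (-(ddL r L b0 : ℤ) * ∑ b ∈ Finset.univ.erase b0, ve b) := by
            rw [Finset.sum_mul]
        _ = _ := by rw [hβ b0, one_mul]
    have hxval : ∀ (b : TB r) (hb : b ≠ b0) (j : Fin (blockLen10 r n b)),
        x ⟨b, j⟩ = tc x b * (mhat r n l L b j : ℤ) := by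
      intro b hb j
      refine mul_left_cancel₀ hk0 ?_
      calc k * x ⟨b, j⟩ = blockVec10 r n l b j * ve b := eqb b hb j
        _ = ((ddL r L b : ℤ) * ve b) * (mhat r n l L b j : ℤ) := by rw [hmz b j]; ring
        _ = (k * tc x b) * (mhat r n l L b j : ℤ) := by rw [htb b hb]
        _ = k * (tc x b * (mhat r n l L b j : ℤ)) := by ring
    have hxval0 : ∀ j : Fin (blockLen10 r n b0),
        x ⟨b0, j⟩ = tc x b0 * (mhat r n l L b0 j : ℤ) := by
      intro j
      refine mul_left_cancel₀ hk0 ?_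
      calc k * x ⟨b0, j⟩
          = -(blockVec10 r n l b0 j) * ∑ b ∈ Finset.univ.erase b0, ve b := eq0 j
        _ = (-(ddL r L b0 : ℤ) * ∑ b ∈ Finset.univ.erase b0, ve b) *
              (mhat r n l L b0 j : ℤ) := by rw [hmz b0 j]; ring
        _ = (k * tc x b0) * (mhat r n l L b0 j : ℤ) := by rw [htb0]
        _ = k * (tc x b0 * (mhat r n l L b0 j : ℤ)) := by ring
    have hsum : ∑ b, tc x b * (EeL r L b : ℤ) = 0 := by
      refine mul_left_cancel₀ hk0 ?_
      rw [mul_zero, Finset.mul_sum]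
      rw [← Finset.add_sum_erase _ _ (Finset.mem_univ b0)]
      have h1 : k * (tc x b0 * (EeL r L b0 : ℤ))
          = -(DdL r L : ℤ) * ∑ b ∈ Finset.univ.erase b0, ve b := by
        calc k * (tc x b0 * (EeL r L b0 : ℤ)) = (k * tc x b0) * (EeL r L b0 : ℤ) := by ring
          _ = (-(ddL r L b0 : ℤ) * ∑ b ∈ Finset.univ.erase b0, ve b) *
                (EeL r L b0 : ℤ) := by rw [htb0]
          _ = -((ddL r L b0 : ℤ) * (EeL r L b0 : ℤ)) *
                ∑ b ∈ Finset.univ.erase b0, ve b := by ring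
          _ = -(DdL r L : ℤ) * ∑ b ∈ Finset.univ.erase b0, ve b := by rw [hEeZ b0]
      have h2 : ∑ b ∈ Finset.univ.erase b0, k * (tc x b * (EeL r L b : ℤ))
          = (DdL r L : ℤ) * ∑ b ∈ Finset.univ.erase b0, ve b := by
        rw [Finset.mul_sum]
        refine Finset.sum_congr rfl fun b hb => ?_
        have hbne : b ≠ b0 := (Finset.mem_erase.mp hb).1
        calc k * (tc x b * (EeL r L b : ℤ)) = (k * tc x b) * (EeL r L b : ℤ) := by ring
          _ = ((ddL r L b : ℤ) * ve b) * (EeL r L b : ℤ) := by rw [htb b hbne]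
          _ = ((ddL r L b : ℤ) * (EeL r L b : ℤ)) * ve b := by ring
          _ = (DdL r L : ℤ) * ve b := by rw [hEeZ b]
      rw [h1, h2]
      ring
    have h1 : F' a = q x := by
      show π a.1 = q x
      rw [← hx]
      exact Submodule.liftQ_apply _ q x
    have hqx0 : qf x = 0 := h1.symm.trans ha
    simp only [hqfdef, Prod.mk_eq_zero] at hqx0
    obtain ⟨hc0, hc1, hc2, hcP⟩ := hqx0
    have hcP' : ∀ (k' : Fin (r - 2)) (c : Fin 3),
        ((tc x (Sum.inr (k', c.castSucc)) : ℤ) : ZMod (L (k'.1 + 3))) = 0 := by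
      intro k' c
      exact congrFun (congrFun hcP k') c
    have hmeas : ∀ (b : TB r) (N : ℕ), N = ddL r L b →
        ((tc x b : ℤ) : ZMod N) = 0 → (ddL r L b : ℤ) ∣ tc x b := by
      intro b N hN h0
      rw [← hN]
      exact (ZMod.intCast_zmod_eq_zero_iff_dvd _ _).mp h0
    have hexp := sumB (fun b : TB r => tc x b * (EeL r L b : ℤ))
    rw [hsum] at hexp
    have hcancel : ∀ (b : TB r), (ddL r L b : ℤ) ∣ tc x b * (EeL r L b : ℤ) →
        (ddL r L b : ℤ) ∣ tc x b := by
      intro b hdv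
      refine Int.dvd_of_dvd_mul_right_of_gcd_one (b := (EeL r L b : ℤ)) ?_ ?_
      · rwa [mul_comm] at hdv
      · exact hcopE b
    have hd01 : (ddL r L (Sum.inl (0, 1)) : ℤ) ∣ tc x (Sum.inl (0, 1)) :=
      hmeas _ (L 0 / 2) rfl hc0
    have hd10 : (ddL r L (Sum.inl (1, 0)) : ℤ) ∣ tc x (Sum.inl (1, 0)) :=
      hmeas _ (L 1 / 2) rfl hc1
    have hd20 : (ddL r L (Sum.inl (2, 0)) : ℤ) ∣ tc x (Sum.inl (2, 0)) :=
      hmeas _ (L 2 / 2) rfl hc2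
    have hdM : ∀ (k' : Fin (r - 2)) (c : Fin 3),
        (ddL r L (Sum.inr (k', c.castSucc)) : ℤ) ∣ tc x (Sum.inr (k', c.castSucc)) :=
      fun k' c => hmeas _ (L (k'.1 + 3)) rfl (hcP' k' c)
    have hd11 : (ddL r L (Sum.inl (1, 1)) : ℤ) ∣ tc x (Sum.inl (1, 1)) := by
      apply hcancel
      have heq : tc x (Sum.inl (1, 1)) * (EeL r L (Sum.inl (1, 1)) : ℤ)
          = -(tc x (Sum.inl (0, 0)) * (EeL r L (Sum.inl (0, 0)) : ℤ)
            + tc x (Sum.inl (0, 1)) * (EeL r L (Sum.inl (0, 1)) : ℤ)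
            + tc x (Sum.inl (1, 0)) * (EeL r L (Sum.inl (1, 0)) : ℤ)
            + tc x (Sum.inl (2, 0)) * (EeL r L (Sum.inl (2, 0)) : ℤ)
            + tc x (Sum.inl (2, 1)) * (EeL r L (Sum.inl (2, 1)) : ℤ)
            + ∑ k' : Fin (r - 2),
                (tc x (Sum.inr (k', 0)) * (EeL r L (Sum.inr (k', 0)) : ℤ)
                + tc x (Sum.inr (k', 1)) * (EeL r L (Sum.inr (k', 1)) : ℤ)
                + tc x (Sum.inr (k', 2)) * (EeL r L (Sum.inr (k', 2)) : ℤ)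
                + tc x (Sum.inr (k', 3)) * (EeL r L (Sum.inr (k', 3)) : ℤ))) := by
        linarith [hexp]
      rw [heq]
      rw [dvd_neg]
      refine dvd_add (dvd_add (dvd_add (dvd_add (dvd_add ?_ ?_) ?_) ?_) ?_) ?_
      · exact ((hdvdE _ _ (by simp [grpB]))).mul_left _
      · exact ((hdvdE _ _ (by simp [grpB]))).mul_left _
      · exact hd10.mul_right _
      · exact ((hdvdE _ _ (by simp [grpB]))).mul_left _
      · exact ((hdvdE _ _ (by simp [grpB]))).mul_left _
      · refine Finset.dvd_sum fun k' _ => ?_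
        refine dvd_add (dvd_add (dvd_add ?_ ?_) ?_) ?_ <;>
          exact ((hdvdE _ _ (by simp [grpB]))).mul_left _
    have hd21 : (ddL r L (Sum.inl (2, 1)) : ℤ) ∣ tc x (Sum.inl (2, 1)) := by
      apply hcancel
      have heq : tc x (Sum.inl (2, 1)) * (EeL r L (Sum.inl (2, 1)) : ℤ)
          = -(tc x (Sum.inl (0, 0)) * (EeL r L (Sum.inl (0, 0)) : ℤ)
            + tc x (Sum.inl (0, 1)) * (EeL r L (Sum.inl (0, 1)) : ℤ)
            + tc x (Sum.inl (1, 0)) * (EeL r L (Sum.inl (1, 0)) : ℤ)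
            + tc x (Sum.inl (1, 1)) * (EeL r L (Sum.inl (1, 1)) : ℤ)
            + tc x (Sum.inl (2, 0)) * (EeL r L (Sum.inl (2, 0)) : ℤ)
            + ∑ k' : Fin (r - 2),
                (tc x (Sum.inr (k', 0)) * (EeL r L (Sum.inr (k', 0)) : ℤ)
                + tc x (Sum.inr (k', 1)) * (EeL r L (Sum.inr (k', 1)) : ℤ)
                + tc x (Sum.inr (k', 2)) * (EeL r L (Sum.inr (k', 2)) : ℤ)
                + tc x (Sum.inr (k', 3)) * (EeL r L (Sum.inr (k', 3)) : ℤ))) := by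
        linarith [hexp]
      rw [heq, dvd_neg]
      refine dvd_add (dvd_add (dvd_add (dvd_add (dvd_add ?_ ?_) ?_) ?_) ?_) ?_
      · exact ((hdvdE _ _ (by simp [grpB]))).mul_left _
      · exact ((hdvdE _ _ (by simp [grpB]))).mul_left _
      · exact ((hdvdE _ _ (by simp [grpB]))).mul_left _
      · exact ((hdvdE _ _ (by simp [grpB]))).mul_left _
      · exact hd20.mul_right _
      · refine Finset.dvd_sum fun k' _ => ?_
        refine dvd_add (dvd_add (dvd_add ?_ ?_) ?_) ?_ <;>
          exact ((hdvdE _ _ (by simp [grpB]))).mul_left _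
    have hd3 : ∀ k0 : Fin (r - 2),
        (ddL r L (Sum.inr (k0, 3)) : ℤ) ∣ tc x (Sum.inr (k0, 3)) := by
      intro k0
      apply hcancel
      have hsplit := (Finset.add_sum_erase Finset.univ
        (fun k' : Fin (r - 2) =>
          tc x (Sum.inr (k', 0)) * (EeL r L (Sum.inr (k', 0)) : ℤ)
          + tc x (Sum.inr (k', 1)) * (EeL r L (Sum.inr (k', 1)) : ℤ)
          + tc x (Sum.inr (k', 2)) * (EeL r L (Sum.inr (k', 2)) : ℤ)
          + tc x (Sum.inr (k', 3)) * (EeL r L (Sum.inr (k', 3)) : ℤ))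
        (Finset.mem_univ k0)).symm
      rw [hsplit] at hexp
      have heq : tc x (Sum.inr (k0, 3)) * (EeL r L (Sum.inr (k0, 3)) : ℤ)
          = -(tc x (Sum.inl (0, 0)) * (EeL r L (Sum.inl (0, 0)) : ℤ)
            + tc x (Sum.inl (0, 1)) * (EeL r L (Sum.inl (0, 1)) : ℤ)
            + tc x (Sum.inl (1, 0)) * (EeL r L (Sum.inl (1, 0)) : ℤ)
            + tc x (Sum.inl (1, 1)) * (EeL r L (Sum.inl (1, 1)) : ℤ)
            + tc x (Sum.inl (2, 0)) * (EeL r L (Sum.inl (2, 0)) : ℤ)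
            + tc x (Sum.inl (2, 1)) * (EeL r L (Sum.inl (2, 1)) : ℤ)
            + (tc x (Sum.inr (k0, 0)) * (EeL r L (Sum.inr (k0, 0)) : ℤ)
              + tc x (Sum.inr (k0, 1)) * (EeL r L (Sum.inr (k0, 1)) : ℤ)
              + tc x (Sum.inr (k0, 2)) * (EeL r L (Sum.inr (k0, 2)) : ℤ))
            + ∑ k' ∈ Finset.univ.erase k0,
                (tc x (Sum.inr (k', 0)) * (EeL r L (Sum.inr (k', 0)) : ℤ)
                + tc x (Sum.inr (k', 1)) * (EeL r L (Sum.inr (k', 1)) : ℤ)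
                + tc x (Sum.inr (k', 2)) * (EeL r L (Sum.inr (k', 2)) : ℤ)
                + tc x (Sum.inr (k', 3)) * (EeL r L (Sum.inr (k', 3)) : ℤ))) := by
        linarith [hexp]
      rw [heq, dvd_neg]
      refine dvd_add (dvd_add (dvd_add (dvd_add (dvd_add (dvd_add (dvd_add
        ?_ ?_) ?_) ?_) ?_) ?_) ?_) ?_
      · exact ((hdvdE _ _ (by simp [grpB]))).mul_left _
      · exact ((hdvdE _ _ (by simp [grpB]))).mul_left _
      · exact ((hdvdE _ _ (by simp [grpB]))).mul_left _
      · exact ((hdvdE _ _ (by simp [grpB]))).mul_left _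
      · exact ((hdvdE _ _ (by simp [grpB]))).mul_left _
      · exact ((hdvdE _ _ (by simp [grpB]))).mul_left _
      · refine dvd_add (dvd_add ?_ ?_) ?_
        · exact (hdM k0 0).mul_right _
        · exact (hdM k0 1).mul_right _
        · exact (hdM k0 2).mul_right _
      · refine Finset.dvd_sum fun k' hk' => ?_
        have hne : k0 ≠ k' := fun h => (Finset.mem_erase.mp hk').1 h.symm
        refine dvd_add (dvd_add (dvd_add ?_ ?_) ?_) ?_ <;>
          exact ((hdvdE _ _ (by simp [grpB, hne]))).mul_left _
    have hall : ∀ (b : TB r), b ≠ b0 → (ddL r L b : ℤ) ∣ tc x b := by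
      rintro (⟨i, c⟩ | ⟨k', c⟩) hb
      · fin_cases i <;> fin_cases c
        · rw [hb0def] at hb; simp at hb
        · exact hd01
        · exact hd10
        · exact hd11
        · exact hd20
        · exact hd21
      · fin_cases c
        · exact hdM k' 0
        · exact hdM k' 1
        · exact hdM k' 2
        · exact hd3 k'
    set γ : TB r → ℤ := fun b => tc x b / ddL r L b with hγdef
    have hγeq : ∀ (b : TB r), b ≠ b0 → (ddL r L b : ℤ) * γ b = tc x b := fun b hb =>
      Int.mul_ediv_cancel' (hall b hb)
    have hEne : (EeL r L b0 : ℤ) ≠ 0 := Int.natCast_ne_zero.mpr (hEpos b0).ne'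
    have hb0c : tc x b0 = -(ddL r L b0 : ℤ) * ∑ b ∈ Finset.univ.erase b0, γ b := by
      refine mul_right_cancel₀ hEne ?_
      have hsplit := Finset.add_sum_erase Finset.univ
        (fun b => tc x b * (EeL r L b : ℤ)) (Finset.mem_univ b0)
      rw [hsum] at hsplit
      beta_reduce at hsplit
      have h2 : ∑ b ∈ Finset.univ.erase b0, tc x b * (EeL r L b : ℤ)
          = (∑ b ∈ Finset.univ.erase b0, γ b) * (DdL r L : ℤ) := by
        rw [Finset.sum_mul]
        refine Finset.sum_congr rfl fun b hb => ?_
        have hbne : b ≠ b0 := (Finset.mem_erase.mp hb).1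
        calc tc x b * (EeL r L b : ℤ)
            = ((ddL r L b : ℤ) * γ b) * (EeL r L b : ℤ) := by rw [hγeq b hbne]
          _ = γ b * ((ddL r L b : ℤ) * (EeL r L b : ℤ)) := by ring
          _ = γ b * (DdL r L : ℤ) := by rw [hEeZ b]
      have h3 : tc x b0 * (EeL r L b0 : ℤ)
          = -((∑ b ∈ Finset.univ.erase b0, γ b) * (DdL r L : ℤ)) := by
        linarith [hsplit, h2]
      rw [h3, ← hEeZ b0]
      ring
    have hmem : x ∈ LinearMap.range
        ((trinMatrix b0 (blockLen10 r n) (blockVec10 r n l)).transpose.mulVecLin) := by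
      refine ⟨fun row => γ row.1, ?_⟩
      funext col
      obtain ⟨b, j⟩ := col
      rw [Matrix.mulVecLin_apply]
      by_cases hb : b = b0
      · subst hb
        rw [mulVec_b0 b0 _ _ _ j, hxval0 j, hmz b0 j]
        have hγs : ∑ row : {bb : TB r // bb ≠ b0}, γ row.1
            = ∑ bb ∈ Finset.univ.erase b0, γ bb := sum_ne_b0 b0 γ
        rw [hγs, hb0c]
        ring
      · rw [mulVec_ne b0 _ _ _ b hb j, hxval b hb j, hmz b j, ← hγeq b hb]
        ring
    have ha1 : a.1 = 0 := by
      rw [← hx, Submodule.Quotient.mk_eq_zero]; exact hmem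
    exact Subtype.ext ha1
  have hsurj : Function.Surjective F' := by
    rintro ⟨a0, a1, a2, w⟩
    obtain ⟨z0, hz0⟩ := ZMod.intCast_surjective a0
    obtain ⟨z1, hz1⟩ := ZMod.intCast_surjective a1
    obtain ⟨z2, hz2⟩ := ZMod.intCast_surjective a2
    choose W hW using fun (k : Fin (r - 2)) (c : Fin 3) => ZMod.intCast_surjective (w k c)
    set coeff : TB r → ℤ := fun b =>
      match b with
      | .inl (i, c) =>
        if i = 0 then (if c = 0 then -z0 else z0)
        else if i = 1 then (if c = 0 then z1 else -z1)
        else (if c = 0 then z2 else -z2)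
      | .inr (k, c) => if h : (c : ℕ) < 3 then W k ⟨c.1, h⟩ else -(W k 0 + W k 1 + W k 2)
      with hcoeffdef
    set x : ((b : TB r) × Fin (blockLen10 r n b)) → ℤ :=
      fun col => coeff col.1 * (mhat r n l L col.1 col.2 : ℤ) with hxdef
    have htcx : ∀ b : TB r, tc x b = coeff b := by
      intro b
      simp only [htcdef, hxdef]
      calc ∑ j, β b j * (coeff b * (mhat r n l L b j : ℤ))
          = (∑ j, β b j * (mhat r n l L b j : ℤ)) * coeff b := by
            rw [Finset.sum_mul]; exact Finset.sum_congr rfl fun j _ => by ring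
        _ = coeff b := by rw [hβ b, one_mul]
    have hco00 : coeff (Sum.inl (0, 0)) = -z0 := by simp [hcoeffdef]
    have hco01 : coeff (Sum.inl (0, 1)) = z0 := by simp [hcoeffdef]
    have hco10 : coeff (Sum.inl (1, 0)) = z1 := by simp [hcoeffdef]
    have hco11 : coeff (Sum.inl (1, 1)) = -z1 := by simp [hcoeffdef]
    have hco20 : coeff (Sum.inl (2, 0)) = z2 := by simp [hcoeffdef]
    have hco21 : coeff (Sum.inl (2, 1)) = -z2 := by simp [hcoeffdef]
    have hco00b : coeff b0 = -z0 := by rw [hb0def]; exact hco00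
    have hcoR : ∀ (k : Fin (r - 2)) (c : Fin 3),
        coeff (Sum.inr (k, c.castSucc)) = W k c := by
      intro k c
      simp only [hcoeffdef]
      rw [dif_pos (show ((c.castSucc : Fin 4) : ℕ) < 3 from by
        rw [Fin.coe_castSucc]; exact c.isLt)]
      congr 1
    have hz00 : ∀ k, coeff (Sum.inr (k, (0 : Fin 4))) = W k 0 := fun k => hcoR k 0
    have hz11 : ∀ k, coeff (Sum.inr (k, (1 : Fin 4))) = W k 1 := fun k => hcoR k 1
    have hz22 : ∀ k, coeff (Sum.inr (k, (2 : Fin 4))) = W k 2 := fun k => hcoR k 2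
    have hco3 : ∀ (k : Fin (r - 2)),
        coeff (Sum.inr (k, (3 : Fin 4))) = -(W k 0 + W k 1 + W k 2) := by
      intro k
      simp only [hcoeffdef]
      rw [dif_neg (by decide)]
    have hEc0 : ∑ b, (EeL r L b : ℤ) * coeff b = 0 := by
      rw [sumB (fun b : TB r => (EeL r L b : ℤ) * coeff b)]
      have hsK : ∀ k : Fin (r - 2),
          (EeL r L (Sum.inr (k, (0:Fin 4))) : ℤ) * coeff (Sum.inr (k, 0))
          + (EeL r L (Sum.inr (k, (1:Fin 4))) : ℤ) * coeff (Sum.inr (k, 1))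
          + (EeL r L (Sum.inr (k, (2:Fin 4))) : ℤ) * coeff (Sum.inr (k, 2))
          + (EeL r L (Sum.inr (k, (3:Fin 4))) : ℤ) * coeff (Sum.inr (k, 3)) = 0 := by
        intro k
        rw [hz00 k, hz11 k, hz22 k, hco3 k]
        have e1 : (EeL r L (Sum.inr (k, (1:Fin 4))) : ℤ)
            = (EeL r L (Sum.inr (k, (0:Fin 4))) : ℤ) := rfl
        have e2 : (EeL r L (Sum.inr (k, (2:Fin 4))) : ℤ)
            = (EeL r L (Sum.inr (k, (0:Fin 4))) : ℤ) := rfl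
        have e3 : (EeL r L (Sum.inr (k, (3:Fin 4))) : ℤ)
            = (EeL r L (Sum.inr (k, (0:Fin 4))) : ℤ) := rfl
        rw [e1, e2, e3]
        ring
      rw [Finset.sum_congr rfl (fun k _ => hsK k), Finset.sum_const_zero]
      rw [hco00, hco01, hco10, hco11, hco20, hco21]
      have f1 : (EeL r L (Sum.inl ((0:Fin 3), (1:Fin 2))) : ℤ)
          = (EeL r L (Sum.inl ((0:Fin 3), (0:Fin 2))) : ℤ) := rfl
      have f2 : (EeL r L (Sum.inl ((1:Fin 3), (1:Fin 2))) : ℤ)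
          = (EeL r L (Sum.inl ((1:Fin 3), (0:Fin 2))) : ℤ) := rfl
      have f3 : (EeL r L (Sum.inl ((2:Fin 3), (1:Fin 2))) : ℤ)
          = (EeL r L (Sum.inl ((2:Fin 3), (0:Fin 2))) : ℤ) := rfl
      rw [f1, f2, f3]
      ring
    have hDd0 : ((DdL r L : ℕ) : ℤ) ≠ 0 := Int.natCast_ne_zero.mpr hDd.ne'
    have hvmem : (DdL r L : ℤ) • x ∈ LinearMap.range
        ((trinMatrix b0 (blockLen10 r n) (blockVec10 r n l)).transpose.mulVecLin) := by
      refine ⟨fun row => (EeL r L row.1 : ℤ) * coeff row.1, ?_⟩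
      funext col
      obtain ⟨b, j⟩ := col
      rw [Matrix.mulVecLin_apply]
      have hxc : ((DdL r L : ℤ) • x) ⟨b, j⟩
          = (DdL r L : ℤ) * (coeff b * (mhat r n l L b j : ℤ)) := by
        simp [hxdef]
      by_cases hb : b = b0
      · subst hb
        rw [mulVec_b0 b0 _ _ _ j, hxc, hmz b0 j]
        have hS : ∑ row : {bb : TB r // bb ≠ b0}, (EeL r L row.1 : ℤ) * coeff row.1
            = (EeL r L b0 : ℤ) * z0 := by
          rw [sum_ne_b0 b0 (fun bb => (EeL r L bb : ℤ) * coeff bb), sum_erase_eq, hEc0,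
            hco00b]
          ring
        rw [hS, hco00b, ← hEeZ b0]
        ring
      · rw [mulVec_ne b0 _ _ _ b hb j, hxc, hmz b j, ← hEeZ b]
        ring
    refine ⟨⟨Submodule.Quotient.mk x, ?_⟩, ?_⟩
    · rw [Submodule.mem_torsion_iff]
      refine ⟨⟨(DdL r L : ℤ), mem_nonZeroDivisors_of_ne_zero hDd0⟩, ?_⟩
      rw [Submonoid.mk_smul, ← Submodule.Quotient.mk_smul, Submodule.Quotient.mk_eq_zero]
      exact hvmem
    · show π (Submodule.Quotient.mk x) = _
      rw [Submodule.liftQ_apply]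
      show qf x = _
      simp only [hqfdef, htcx]
      rw [hco01, hco10, hco20, hz0, hz1, hz2]
      refine congrArg₂ Prod.mk rfl (congrArg₂ Prod.mk rfl (congrArg₂ Prod.mk rfl ?_))
      funext k c
      rw [hcoR k c, hW k c]
  exact ⟨(LinearEquiv.ofBijective F' ⟨hinj, hsurj⟩).toAddEquiv⟩
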